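/- Suppose M·X̂ + K·X̂·[[Ĵ₁⁻¹, 0],[0, 0]] = 0, where the inner block matrix is n×n with blocks of sizes n_u and n_φ. Then, partitioning X̂ = [[X̂₁₁, X̂₁₂],[X̂₂₁, X̂₂₂]] with X̂₁₁ ∈ ℝ^{n_u×n_u} and X̂₂₂ ∈ ℝ^{n_φ×n_φ}, one has X̂₁₂ = 0, and both X̂₁₁ and X̂₂₂ are invertible. -/

import Mathlib

open Matrix

/-- Let `M = [[Mu, 0],[0,0]]` with `Mu` invertible, `K` arbitrary,
`X̂` invertible and `Ĵ₁` an invertible diagonal matrix. If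
`M X̂ + K X̂ [[Ĵ₁⁻¹, 0],[0,0]] = 0`, then, partitioning `X̂` into blocks of sizes
`nu` and `nφ`, the upper-right block of `X̂` vanishes and the two diagonal
blocks of `X̂` are invertible. -/
theorem jordan_pair_block_structure (nu nφ : ℕ)
    (Mu : Matrix (Fin nu) (Fin nu) ℝ) (hMuUnit : IsUnit Mu)
    (K : Matrix (Fin nu ⊕ Fin nφ) (Fin nu ⊕ Fin nφ) ℝ)
    (Xhat : Matrix (Fin nu ⊕ Fin nφ) (Fin nu ⊕ Fin nφ) ℝ)
    (hXhatUnit : IsUnit Xhat)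
    (J₁ : Matrix (Fin nu) (Fin nu) ℝ)
    (hJ₁diag : ∀ i j, i ≠ j → J₁ i j = 0) (hJ₁Unit : IsUnit J₁)
    (M : Matrix (Fin nu ⊕ Fin nφ) (Fin nu ⊕ Fin nφ) ℝ)
    (hM : M = fromBlocks Mu 0 0 0)
    (heig : M * Xhat + K * Xhat * fromBlocks J₁⁻¹ 0 0 0 = 0) :
    Xhat.toBlocks₁₂ = 0 ∧ IsUnit Xhat.toBlocks₁₁ ∧ IsUnit Xhat.toBlocks₂₂ := by
  set X11 := Xhat.toBlocks₁₁
  set X12 := Xhat.toBlocks₁₂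
  set X21 := Xhat.toBlocks₂₁
  set X22 := Xhat.toBlocks₂₂
  have hX : Xhat = fromBlocks X11 X12 X21 X22 := (fromBlocks_toBlocks Xhat).symm
  have hK : K = fromBlocks K.toBlocks₁₁ K.toBlocks₁₂ K.toBlocks₂₁ K.toBlocks₂₂ :=
    (fromBlocks_toBlocks K).symm
  rw [hM, hX, hK] at heig
  simp only [fromBlocks_multiply, fromBlocks_add, Matrix.zero_mul, Matrix.mul_zero,
    add_zero, zero_add] at heig
  have h12 : Mu * X12 = 0 := by
    have := congrArg toBlocks₁₂ heig
    have h0 : toBlocks₁₂ (0 : Matrix (Fin nu ⊕ Fin nφ) (Fin nu ⊕ Fin nφ) ℝ) = 0 := by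
      ext i j; rfl
    simpa [toBlocks_fromBlocks₁₂, h0] using this
  have hMuInv : Invertible Mu := hMuUnit.invertible
  have hX12 : X12 = 0 := by
    calc X12 = ⅟Mu * (Mu * X12) := by rw [← Matrix.mul_assoc, invOf_mul_self, Matrix.one_mul]
    _ = 0 := by rw [h12, Matrix.mul_zero]
  have hdet : IsUnit Xhat.det := (isUnit_iff_isUnit_det Xhat).mp hXhatUnit
  rw [hX, hX12, det_fromBlocks_zero₁₂] at hdet
  exact ⟨hX12, (isUnit_iff_isUnit_det _).mpr (isUnit_of_mul_isUnit_left hdet),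
    (isUnit_iff_isUnit_det _).mpr (isUnit_of_mul_isUnit_right hdet)⟩
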